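/- For the ZDT3 problem with d = 30 variables, every point x ∈ [0,1]^30 with Σ_{i=2}^{30} x_i > 0 is strictly dominated by the point y = (x_1, 0, ..., 0): f1(y) = f1(x) and f2(y) < f2(x). Consequently every Pareto optimal point of ZDT3 satisfies x_i = 0 for all i ≥ 2. -/
import Mathlib


/-- `g(x) = 1 + (9/(30−1))·Σ_{i=2}^{30} x_i` for ZDT3 (0-indexed: sum over `i ≠ 0`). -/
noncomputable def zdt3G (x : Fin 30 → ℝ) : ℝ :=
  1 + (9 / 29) * ∑ i ∈ Finset.univ.erase (0 : Fin 30), x i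

/-- `f2(x) = g(x)·(1 − √(x_1/g(x)) − (x_1/g(x))·sin(10π x_1))` for ZDT3. -/
noncomputable def zdt3F2 (x : Fin 30 → ℝ) : ℝ :=
  zdt3G x * (1 - Real.sqrt (x 0 / zdt3G x)
    - (x 0 / zdt3G x) * Real.sin (10 * Real.pi * x 0))

lemma zdt3_key (x : Fin 30 → ℝ) (hx : ∀ i, x i ∈ Set.Icc (0 : ℝ) 1)
    (hs : 0 < ∑ i ∈ Finset.univ.erase (0 : Fin 30), x i) :
    zdt3F2 (fun i : Fin 30 => if i = 0 then x 0 else 0) < zdt3F2 x := by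
  have hg1 : zdt3G (fun i : Fin 30 => if i = 0 then x 0 else 0) = 1 := by
    unfold zdt3G
    rw [Finset.sum_eq_zero]
    · ring
    · intro i hi
      simp [Finset.ne_of_mem_erase hi]
  have hg_gt : 1 < zdt3G x := by
    unfold zdt3G; nlinarith
  set g := zdt3G x with hgdef
  have hg0 : (0 : ℝ) < g := by linarith
  have hx0 : 0 ≤ x 0 := (hx 0).1
  have hx1 : x 0 ≤ 1 := (hx 0).2
  unfold zdt3F2
  rw [hg1, ← hgdef]
  simp only [if_pos rfl, if_true, div_one, one_mul]
  have hsq : Real.sqrt (x 0 / g) = Real.sqrt (x 0) / Real.sqrt g :=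
    Real.sqrt_div hx0 g
  rw [hsq]
  have hb1 : 1 < Real.sqrt g := by
    rw [show (1:ℝ) = Real.sqrt 1 by simp]
    exact Real.sqrt_lt_sqrt (by norm_num) hg_gt
  have hb0 : 0 < Real.sqrt g := by linarith
  have hbb : Real.sqrt g * Real.sqrt g = g := Real.mul_self_sqrt hg0.le
  have ha1 : Real.sqrt (x 0) ≤ 1 := by
    rw [show (1:ℝ) = Real.sqrt 1 by simp]
    exact Real.sqrt_le_sqrt hx1
  have ha0 : 0 ≤ Real.sqrt (x 0) := Real.sqrt_nonneg _
  have e1 : g * (x 0 / g * Real.sin (10 * Real.pi * x 0))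
      = x 0 * Real.sin (10 * Real.pi * x 0) := by
    field_simp
  have e2 : g * (Real.sqrt (x 0) / Real.sqrt g) = Real.sqrt g * Real.sqrt (x 0) := by
    field_simp
    linear_combination (-Real.sqrt (x 0)) * hbb
  have hrhs : g * (1 - Real.sqrt (x 0) / Real.sqrt g
      - x 0 / g * Real.sin (10 * Real.pi * x 0))
      = g - Real.sqrt g * Real.sqrt (x 0) - x 0 * Real.sin (10 * Real.pi * x 0) := by
    rw [mul_sub, mul_sub, e1, e2, mul_one]
  rw [hrhs]
  nlinarith [hbb, mul_nonneg (sub_nonneg.2 ha1) (sub_nonneg.2 hb1.le)]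

/-- For ZDT3, every feasible point with `Σ_{i=2}^{30} x_i > 0` is strictly
dominated by `y = (x_1, 0, ..., 0)`; consequently every Pareto optimal point
satisfies `x_i = 0` for all `i ≥ 2`. -/
theorem zdt3_dominated_and_pareto_necessary :
    (∀ x : Fin 30 → ℝ, (∀ i, x i ∈ Set.Icc (0 : ℝ) 1) →
      0 < ∑ i ∈ Finset.univ.erase (0 : Fin 30), x i →
      (fun i : Fin 30 => if i = 0 then x 0 else 0) 0 = x 0 ∧
        zdt3F2 (fun i : Fin 30 => if i = 0 then x 0 else 0) < zdt3F2 x) ∧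
    (∀ x : Fin 30 → ℝ, (∀ i, x i ∈ Set.Icc (0 : ℝ) 1) →
      (¬ ∃ y : Fin 30 → ℝ, (∀ i, y i ∈ Set.Icc (0 : ℝ) 1) ∧
          y 0 ≤ x 0 ∧ zdt3F2 y ≤ zdt3F2 x ∧ (y 0 < x 0 ∨ zdt3F2 y < zdt3F2 x)) →
      ∀ i : Fin 30, i ≠ 0 → x i = 0) := by
  constructor
  · intro x hx hs
    exact ⟨rfl, zdt3_key x hx hs⟩
  · intro x hx hnd i hi
    by_contra h
    have hpos : 0 < x i := lt_of_le_of_ne (hx i).1 (Ne.symm h)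
    have hs : 0 < ∑ j ∈ Finset.univ.erase (0 : Fin 30), x j := by
      refine Finset.sum_pos' (fun j _ => (hx j).1) ⟨i, ?_, hpos⟩
      simp [hi]
    have hlt := zdt3_key x hx hs
    exact hnd ⟨fun j => if j = 0 then x 0 else 0, fun j => by
      by_cases hj : j = 0 <;> simp [hj, Set.mem_Icc]
      · exact hx 0, by simp, hlt.le, Or.inr hlt⟩
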